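/- Let (X,d) be a complete metric space and f_1,…,f_N : X → X nonexpansive maps such that there exists a nonempty closed bounded set C with Φ(C) ⊆ C. Let (x_n)_{n≥0} and (y_n)_{n≥0} be two orbits, starting at x_0 and y_0 respectively, whose driving sequences (i_n)_{n≥1} and (j_n)_{n≥1} are both disjunctive. Assume condition (C): there exists a finite word (u_1,…,u_l) ∈ {1,…,N}^l such that the composition f_{u_l} ∘ … ∘ f_{u_1} is a Lipschitz contraction (Lipschitz with some constant L < 1). Then the two orbits have the same omega-limit set: ω((x_n)) = ω((y_n)). -/

import Mathlib

/-- The omega-limit set of a sequence: the descending intersection of the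
closures of the tails of the sequence. -/
def omegaLimitSet {X : Type*} [MetricSpace X] (x : ℕ → X) : Set X :=
  ⋂ m : ℕ, closure (x '' Set.Ici m)

/-- Apply the maps of the IFS along a word, the head of the list acting first:
`wordMap f [u₁, …, u_l] = f_{u_l} ∘ … ∘ f_{u_1}`. -/
def wordMap {X : Type*} {N : ℕ} (f : Fin N → X → X) : List (Fin N) → X → X
  | [], p => p
  | i :: w, p => wordMap f w (f i p)

/-- A sequence of symbols is disjunctive if it contains every finite word over
the alphabet as a consecutive subword. -/
def Disjunctive {N : ℕ} (σ : ℕ → Fin N) : Prop :=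
  ∀ (m : ℕ) (w : Fin m → Fin N), ∃ n₀ : ℕ, ∀ j : Fin m, σ (n₀ + (j : ℕ)) = w j

section Helpers

variable {X : Type*} [MetricSpace X] {N : ℕ}


variable {X : Type*} [MetricSpace X] {N : ℕ}

lemma wordMap_append (f : Fin N → X → X) (w1 w2 : List (Fin N)) (p : X) :
    wordMap f (w1 ++ w2) p = wordMap f w2 (wordMap f w1 p) := by
  induction w1 generalizing p with
  | nil => simp [wordMap]
  | cons i w ih => simp [wordMap, ih]

lemma wordMap_dist_le (f : Fin N → X → X)
    (hf : ∀ (i : Fin N) (a b : X), dist (f i a) (f i b) ≤ dist a b)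
    (w : List (Fin N)) (a b : X) :
    dist (wordMap f w a) (wordMap f w b) ≤ dist a b := by
  induction w generalizing a b with
  | nil => simp [wordMap]
  | cons i w ih => exact (ih (f i a) (f i b)).trans (hf i a b)

lemma wordMap_join_replicate (f : Fin N → X → X) (u : List (Fin N)) (k : ℕ) (p : X) :
    wordMap f (List.flatten (List.replicate k u)) p = (wordMap f u)^[k] p := by
  induction k generalizing p with
  | zero => simp [wordMap]
  | succ k ih =>
    have h : (List.replicate (k+1) u).flatten = u ++ (List.replicate k u).flatten := rfl
    rw [h, wordMap_append, ih, Function.iterate_succ_apply]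

lemma iterate_contract (W : X → X) (L : ℝ)
    (h : ∀ a b : X, dist (W a) (W b) ≤ L * dist a b) (hL0 : 0 ≤ L) (k : ℕ) (a b : X) :
    dist (W^[k] a) (W^[k] b) ≤ L ^ k * dist a b := by
  induction k generalizing a b with
  | zero => simp
  | succ k ih =>
    calc dist (W^[k+1] a) (W^[k+1] b) = dist (W^[k] (W a)) (W^[k] (W b)) := by
          rw [Function.iterate_succ_apply, Function.iterate_succ_apply]
      _ ≤ L ^ k * dist (W a) (W b) := ih _ _
      _ ≤ L ^ k * (L * dist a b) := by
          exact mul_le_mul_of_nonneg_left (h a b) (pow_nonneg hL0 k)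
      _ = L ^ (k+1) * dist a b := by ring

lemma orbit_wordMap (f : Fin N → X → X) (x : ℕ → X) (σ : ℕ → Fin N)
    (hx : ∀ n : ℕ, x (n + 1) = f (σ n) (x n)) (w : List (Fin N)) :
    ∀ n₀ : ℕ, (∀ j : Fin w.length, σ (n₀ + (j : ℕ)) = w.get j) →
    x (n₀ + w.length) = wordMap f w (x n₀) := by
  induction w with
  | nil => intro n₀ _; simp [wordMap]
  | cons i w ih =>
    intro n₀ hw
    have h0 : σ n₀ = i := by simpa using hw ⟨0, by simp⟩
    have h1 : x (n₀ + 1) = f i (x n₀) := by rw [hx n₀, h0]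
    have h2 := ih (n₀ + 1) (fun j => by
      have := hw ⟨(j : ℕ) + 1, by simpa using Nat.succ_lt_succ j.2⟩
      simpa [Nat.add_comm, Nat.add_assoc, Nat.add_left_comm] using this)
    have : n₀ + (i :: w).length = (n₀ + 1) + w.length := by
      simp [Nat.add_comm, Nat.add_assoc, Nat.add_left_comm]
    rw [this, h2, h1, wordMap]

/-- any word occurs as a subword at a position ≥ M -/
lemma disjunctive_tail {σ : ℕ → Fin N} (hσ : Disjunctive σ) (w : List (Fin N)) (M : ℕ) :
    ∃ n₁ : ℕ, M ≤ n₁ ∧ ∀ j : Fin w.length, σ (n₁ + (j : ℕ)) = w.get j := by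
  classical
  set v : List (Fin N) := List.replicate M (σ 0) ++ w with hv
  have hvlen : v.length = M + w.length := by simp [hv]
  obtain ⟨n₀, hn₀⟩ := hσ v.length (fun j => v.get j)
  refine ⟨n₀ + M, Nat.le_add_left _ _, fun j => ?_⟩
  have hj : M + (j : ℕ) < v.length := by omega
  have := hn₀ ⟨M + (j : ℕ), hj⟩
  have hidx : v.get ⟨M + (j : ℕ), hj⟩ = w.get j := by
    simp [hv, List.getElem_append_right, List.length_replicate]
  rw [hidx] at this
  rw [← this, Nat.add_assoc]

lemma omega_sub (f : Fin N → X → X)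
    (hf : ∀ (i : Fin N) (a b : X), dist (f i a) (f i b) ≤ dist a b)
    (C : Set X) (hCne : C.Nonempty) (hCbdd : Bornology.IsBounded C)
    (hCsub : (⋃ i : Fin N, f i '' C) ⊆ C)
    (x y : ℕ → X) (σ τ : ℕ → Fin N)
    (hx : ∀ n : ℕ, x (n + 1) = f (σ n) (x n))
    (hy : ∀ n : ℕ, y (n + 1) = f (τ n) (y n))
    (hσ : Disjunctive σ) (hτ : Disjunctive τ)
    (hcontr : ∃ (u : List (Fin N)) (L : ℝ), u ≠ [] ∧ 0 ≤ L ∧ L < 1 ∧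
      ∀ a b : X, dist (wordMap f u a) (wordMap f u b) ≤ L * dist a b) :
    omegaLimitSet x ⊆ omegaLimitSet y := by
  intro p hp
  simp only [omegaLimitSet, Set.mem_iInter] at hp ⊢
  intro m
  rw [Metric.mem_closure_iff]
  intro ε hε
  obtain ⟨u, L, hune, hL0, hL1, hLc⟩ := hcontr
  obtain ⟨c₀, hc₀⟩ := hCne
  have orbbd : ∀ (z : ℕ → X) (ρ : ℕ → Fin N), (∀ n, z (n + 1) = f (ρ n) (z n)) →
      ∀ n, ∃ c ∈ C, dist (z n) c ≤ dist (z 0) c₀ := by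
    intro z ρ hz n
    induction n with
    | zero => exact ⟨c₀, hc₀, le_refl _⟩
    | succ n ih =>
      obtain ⟨c, hcC, hcd⟩ := ih
      refine ⟨f (ρ n) c, hCsub (Set.mem_iUnion.2 ⟨ρ n, Set.mem_image_of_mem _ hcC⟩), ?_⟩
      rw [hz n]
      exact (hf _ _ _).trans hcd
  set D : ℝ := dist (x 0) c₀ + Metric.diam C + dist (y 0) c₀ with hD
  have hD0 : 0 ≤ D := by
    have := Metric.diam_nonneg (s := C)
    have := dist_nonneg (x := x 0) (y := c₀)
    have := dist_nonneg (x := y 0) (y := c₀)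
    linarith
  have hDbd : ∀ a b : X, (∃ c ∈ C, dist a c ≤ dist (x 0) c₀) →
      (∃ c ∈ C, dist b c ≤ dist (y 0) c₀) → dist a b ≤ D := by
    rintro a b ⟨c, hc, hac⟩ ⟨c', hc', hbc'⟩
    calc dist a b ≤ dist a c + dist c c' + dist c' b := dist_triangle4 a c c' b
      _ ≤ dist (x 0) c₀ + Metric.diam C + dist (y 0) c₀ :=
        add_le_add (add_le_add hac (Metric.dist_le_diam_of_mem hCbdd hc hc'))
          (by rw [dist_comm]; exact hbc')
  obtain ⟨k, hk⟩ := exists_pow_lt_of_lt_one (x := (ε / 2) / (D + 1)) (by positivity) hL1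
  have hkD : L ^ k * D < ε / 2 := by
    have h1 : L ^ k * D ≤ L ^ k * (D + 1) :=
      mul_le_mul_of_nonneg_left (by linarith) (pow_nonneg hL0 k)
    have h2 : L ^ k * (D + 1) < (ε / 2) / (D + 1) * (D + 1) :=
      mul_lt_mul_of_pos_right hk (by linarith)
    have h3 : (ε / 2) / (D + 1) * (D + 1) = ε / 2 := by field_simp
    linarith
  set W := wordMap f u with hW
  set uk := (List.replicate k u).flatten with huk
  obtain ⟨s, -, hs⟩ := disjunctive_tail hσ uk 0
  have hxs : x (s + uk.length) = W^[k] (x s) := by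
    rw [orbit_wordMap f x σ hx uk s hs, huk, hW, wordMap_join_replicate]
  set s' := s + uk.length with hs'
  have hp' := hp s'
  rw [Metric.mem_closure_iff] at hp'
  obtain ⟨q, hqmem, hqd⟩ := hp' (ε / 2) (by linarith)
  obtain ⟨n', hn', rfl⟩ := hqmem
  have hn'' : s' ≤ n' := hn'
  set tw : List (Fin N) := List.ofFn (fun j : Fin (n' - s') => σ (s' + (j : ℕ))) with htw
  have htwlen : tw.length = n' - s' := by simp [htw]
  have hxn' : x n' = wordMap f tw (W^[k] (x s)) := by
    have h := orbit_wordMap f x σ hx tw s' (fun j => by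
      simp [htw, List.get_ofFn])
    rw [htwlen] at h
    have hsum : s' + (n' - s') = n' := by omega
    rw [hsum] at h
    rw [h, ← hxs]
  obtain ⟨n₁, hn₁m, hn₁⟩ := disjunctive_tail hτ (uk ++ tw) m
  have hyend : y (n₁ + (uk ++ tw).length) = wordMap f tw (W^[k] (y n₁)) := by
    rw [orbit_wordMap f y τ hy _ n₁ hn₁, wordMap_append, huk, hW, wordMap_join_replicate]
  refine ⟨y (n₁ + (uk ++ tw).length),
    ⟨n₁ + (uk ++ tw).length, by simp only [Set.mem_Ici]; omega, rfl⟩, ?_⟩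
  have hclose : dist (x n') (y (n₁ + (uk ++ tw).length)) ≤ L ^ k * D := by
    rw [hxn', hyend]
    calc dist (wordMap f tw (W^[k] (x s))) (wordMap f tw (W^[k] (y n₁)))
        ≤ dist (W^[k] (x s)) (W^[k] (y n₁)) := wordMap_dist_le f hf tw _ _
      _ ≤ L ^ k * dist (x s) (y n₁) := iterate_contract W L hLc hL0 k _ _
      _ ≤ L ^ k * D := mul_le_mul_of_nonneg_left
          (hDbd _ _ (orbbd x σ hx s) (orbbd y τ hy n₁)) (pow_nonneg hL0 k)
  calc dist p (y (n₁ + (uk ++ tw).length))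
      ≤ dist p (x n') + dist (x n') (y (n₁ + (uk ++ tw).length)) := dist_triangle _ _ _
    _ < ε / 2 + ε / 2 := add_lt_add hqd (hclose.trans_lt hkD)
    _ = ε := by ring

end Helpers

/-- For a nonexpansive IFS on a complete metric space possessing a
nonempty closed bounded subinvariant set, under condition (C) (some finite
composition of the maps is a Lipschitz contraction), any two orbits driven by
disjunctive sequences have the same omega-limit set. -/
theorem stmt_6 {X : Type*} [MetricSpace X] [CompleteSpace X] {N : ℕ}
    (f : Fin N → X → X)
    (hf : ∀ (i : Fin N) (a b : X), dist (f i a) (f i b) ≤ dist a b)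
    (C : Set X) (hCne : C.Nonempty) (hCclosed : IsClosed C)
    (hCbdd : Bornology.IsBounded C) (hCsub : (⋃ i : Fin N, f i '' C) ⊆ C)
    (x y : ℕ → X) (σ τ : ℕ → Fin N)
    (hx : ∀ n : ℕ, x (n + 1) = f (σ n) (x n))
    (hy : ∀ n : ℕ, y (n + 1) = f (τ n) (y n))
    (hσ : Disjunctive σ) (hτ : Disjunctive τ)
    (hcontr : ∃ (u : List (Fin N)) (L : ℝ), u ≠ [] ∧ 0 ≤ L ∧ L < 1 ∧
      ∀ a b : X, dist (wordMap f u a) (wordMap f u b) ≤ L * dist a b) :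
    omegaLimitSet x = omegaLimitSet y := by
  exact Set.Subset.antisymm
    (omega_sub f hf C hCne hCbdd hCsub x y σ τ hx hy hσ hτ hcontr)
    (omega_sub f hf C hCne hCbdd hCsub y x τ σ hy hx hτ hσ hcontr)
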